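/- arXiv:0709.0423 — 3 statements merged into one kernel-verified Lean document; each statement's English description precedes it below -/
import Mathlib

section
/- On T^*(ℝ_{>0} × ℝ) with coordinates (x, y, p, q), let H = (p² + q²)/x, K = q, F = yH − 2pK, and G = y²H − 4(yp − xq)K. Then {H, K} = 0, {H, F} = 0, and {H, G} = 0, i.e. K, F, G are first integrals of the Hamiltonian flow of H. -/
/-- Partial derivative in the first variable of a function of two real variables. -/
noncomputable def pd1 (f : ℝ → ℝ → ℝ) : ℝ → ℝ → ℝ :=
  fun x y => deriv (fun t => f t y) x

/-- Partial derivative in the second variable of a function of two real variables. -/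
noncomputable def pd2 (f : ℝ → ℝ → ℝ) : ℝ → ℝ → ℝ :=
  fun x y => deriv (fun t => f x t) y

/-- The canonical Poisson bracket on `T^*ℝ²` with coordinates `(x, y, p_x, p_y)`:
`{f,g} = f_{p_x} g_x + f_{p_y} g_y − f_x g_{p_x} − f_y g_{p_y}`. -/
noncomputable def pbr (F G : ℝ → ℝ → ℝ → ℝ → ℝ) (x y px py : ℝ) : ℝ :=
    deriv (fun p => F x y p py) px * deriv (fun t => G t y px py) x
  + deriv (fun p => F x y px p) py * deriv (fun t => G x t px py) y
  - deriv (fun t => F t y px py) x * deriv (fun p => G x y p py) px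
  - deriv (fun t => F x t px py) y * deriv (fun p => G x y px p) py

/-- for the geodesic flow of `g₀ = x(dx²+dy²)` on the half-plane
`x > 0`, the functions `K = q`, `F = yH − 2pK`, `G = y²H − 4(yp−xq)K` are first
integrals of `H = (p²+q²)/x`. -/
theorem integrals_of_g0 :
    let H : ℝ → ℝ → ℝ → ℝ → ℝ := fun x _ p q => (p ^ 2 + q ^ 2) / x
    let K : ℝ → ℝ → ℝ → ℝ → ℝ := fun _ _ _ q => q
    let F : ℝ → ℝ → ℝ → ℝ → ℝ := fun x y p q => y * H x y p q - 2 * p * K x y p q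
    let G : ℝ → ℝ → ℝ → ℝ → ℝ := fun x y p q =>
      y ^ 2 * H x y p q - 4 * (y * p - x * q) * K x y p q
    ∀ x y p q : ℝ, 0 < x →
      pbr H K x y p q = 0 ∧ pbr H F x y p q = 0 ∧ pbr H G x y p q = 0 := by
  intro H K F G x y p q hx
  have hx0 : x ≠ 0 := ne_of_gt hx
  have hHx : deriv (fun t : ℝ => (p^2+q^2)/t) x = -(p^2+q^2)/x^2 := by
    have h : HasDerivAt (fun t : ℝ => (p^2+q^2)/t) ((p^2+q^2) * (-(x^2)⁻¹)) x := by
      simpa [div_eq_mul_inv] using (hasDerivAt_inv hx0).const_mul (p^2+q^2)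
    rw [h.deriv]; field_simp
  have hHp : deriv (fun s : ℝ => (s^2+q^2)/x) p = 2*p/x := by
    have h : HasDerivAt (fun s : ℝ => (s^2+q^2)/x) ((2*p)/x) p := by
      simpa using ((hasDerivAt_pow 2 p).add_const (q^2)).div_const x
    rw [h.deriv]
  have hHq : deriv (fun s : ℝ => (p^2+s^2)/x) q = 2*q/x := by
    have h : HasDerivAt (fun s : ℝ => (p^2+s^2)/x) ((2*q)/x) q := by
      simpa using ((hasDerivAt_pow 2 q).const_add (p^2)).div_const x
    rw [h.deriv]
  have hFx : deriv (fun t : ℝ => y*((p^2+q^2)/t) - 2*p*q) x = y*(-(p^2+q^2)/x^2) := by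
    have h : HasDerivAt (fun t : ℝ => y*((p^2+q^2)/t) - 2*p*q)
        (y*((p^2+q^2) * (-(x^2)⁻¹))) x := by
      simpa [div_eq_mul_inv] using
        (((hasDerivAt_inv hx0).const_mul (p^2+q^2)).const_mul y).sub_const (2*p*q)
    rw [h.deriv]; field_simp
  have hFy : deriv (fun s : ℝ => s*((p^2+q^2)/x) - 2*p*q) y = (p^2+q^2)/x := by
    have h : HasDerivAt (fun s : ℝ => s*((p^2+q^2)/x) - 2*p*q) (1*((p^2+q^2)/x)) y :=
      ((hasDerivAt_id y).mul_const ((p^2+q^2)/x)).sub_const (2*p*q)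
    rw [h.deriv]; ring
  have hFp : deriv (fun s : ℝ => y*((s^2+q^2)/x) - 2*s*q) p = y*(2*p/x) - 2*q := by
    have h : HasDerivAt (fun s : ℝ => y*((s^2+q^2)/x) - 2*s*q)
        (y*((2*p)/x) - 2*1*q) p := by
      exact ((((hasDerivAt_pow 2 p).add_const (q^2)).div_const x).const_mul y).sub
        (((hasDerivAt_id p).const_mul 2).mul_const q) |>.congr_deriv (by simp)
    rw [h.deriv]; ring
  have hFq : deriv (fun s : ℝ => y*((p^2+s^2)/x) - 2*p*s) q = y*(2*q/x) - 2*p := by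
    have h : HasDerivAt (fun s : ℝ => y*((p^2+s^2)/x) - 2*p*s)
        (y*((2*q)/x) - (2*p)*1) q := by
      exact ((((hasDerivAt_pow 2 q).const_add (p^2)).div_const x).const_mul y).sub
        ((hasDerivAt_id q).const_mul (2*p)) |>.congr_deriv (by simp)
    rw [h.deriv]; ring
  have hGx : deriv (fun t : ℝ => y^2*((p^2+q^2)/t) - 4*(y*p - t*q)*q) x
      = y^2*(-(p^2+q^2)/x^2) + 4*q^2 := by
    have h : HasDerivAt (fun t : ℝ => y^2*((p^2+q^2)/t) - 4*(y*p - t*q)*q)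
        (y^2*((p^2+q^2) * (-(x^2)⁻¹)) - (4*(-(1*q)))*q) x := by
      have hA : HasDerivAt (fun t : ℝ => y^2*((p^2+q^2)/t))
          (y^2*((p^2+q^2) * (-(x^2)⁻¹))) x := by
        simpa [div_eq_mul_inv] using
          ((hasDerivAt_inv hx0).const_mul (p^2+q^2)).const_mul (y^2)
      have hB : HasDerivAt (fun t : ℝ => 4*(y*p - t*q)*q) ((4*(-(1*q)))*q) x :=
        ((((hasDerivAt_id x).mul_const q).const_sub (y*p)).const_mul 4).mul_const q
      exact hA.sub hB
    rw [h.deriv]; field_simp; ring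
  have hGy : deriv (fun s : ℝ => s^2*((p^2+q^2)/x) - 4*(s*p - x*q)*q) y
      = 2*y*((p^2+q^2)/x) - 4*p*q := by
    have h : HasDerivAt (fun s : ℝ => s^2*((p^2+q^2)/x) - 4*(s*p - x*q)*q)
        ((↑2*y^1)*((p^2+q^2)/x) - (4*(1*p))*q) y := by
      exact ((hasDerivAt_pow 2 y).mul_const ((p^2+q^2)/x)).sub
        ((((hasDerivAt_id y).mul_const p).sub_const (x*q)).const_mul 4 |>.mul_const q)
    rw [h.deriv]; push_cast; ring
  have hGp : deriv (fun s : ℝ => y^2*((s^2+q^2)/x) - 4*(y*s - x*q)*q) p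
      = y^2*(2*p/x) - 4*y*q := by
    have h : HasDerivAt (fun s : ℝ => y^2*((s^2+q^2)/x) - 4*(y*s - x*q)*q)
        (y^2*((2*p)/x) - (4*(y*1))*q) p := by
      refine HasDerivAt.sub ?_ ?_
      · simpa using (((hasDerivAt_pow 2 p).add_const (q^2)).div_const x).const_mul (y^2)
      · exact ((((hasDerivAt_id p).const_mul y).sub_const (x*q)).const_mul 4).mul_const q
    rw [h.deriv]; ring
  have hGq : deriv (fun s : ℝ => y^2*((p^2+s^2)/x) - 4*(y*p - x*s)*s) q
      = y^2*(2*q/x) - 4*(y*p) + 8*x*q := by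
    have h : HasDerivAt (fun s : ℝ => y^2*((p^2+s^2)/x) - 4*(y*p - x*s)*s)
        (y^2*((2*q)/x) - ((4*(-(x*1)))*q + (4*(y*p - x*q))*1)) q := by
      refine HasDerivAt.sub ?_ ?_
      · simpa using (((hasDerivAt_pow 2 q).const_add (p^2)).div_const x).const_mul (y^2)
      · exact ((((hasDerivAt_id q).const_mul x).const_sub (y*p)).const_mul 4).mul (hasDerivAt_id q)
    rw [h.deriv]; ring
  refine ⟨?_, ?_, ?_⟩
  · simp only [pbr, H, K]
    simp [hHp, hHq, hHx]
  · simp only [pbr, H, F, K]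
    rw [hHp, hHq, hHx, hFx, hFy, hFp, hFq]
    simp only [deriv_const]
    field_simp
    ring
  · simp only [pbr, H, G, K]
    rw [hHp, hHq, hHx, hGx, hGy, hGp, hGq]
    simp only [deriv_const]
    field_simp
    ring
end

section
/- On T^*(ℝ_{>0} × ℝ) with coordinates (x, y, p, q), let H = (p² + q²)/x, K = q, F = yH − 2pK, and G = y²H − 4(yp − xq)K. Then the Poisson brackets satisfy {K, F} = H, {K, G} = 2F, and {G, F} = 16K³. -/
lemma dpoly (f : ℝ → ℝ) (b c d t : ℝ) (hf : f = fun s => b*s^2 + c*s + d) :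
    deriv f t = 2*b*t + c := by
  have h : HasDerivAt (fun s : ℝ => b*s^2 + c*s + d) (b * (2*t) + c) t := by
    have h1 : HasDerivAt (fun s : ℝ => s^2) ((2:ℕ)*t^1) t := hasDerivAt_pow 2 t
    have := ((h1.const_mul b).add ((hasDerivAt_id t).const_mul c)).add_const d
    simpa using this
  rw [hf, h.deriv]; ring

lemma dinv (f : ℝ → ℝ) (a b c t : ℝ) (ht : t ≠ 0) (hf : f = fun s => a*s⁻¹ + b*s + c) :
    deriv f t = -a/t^2 + b := by
  have h : HasDerivAt (fun s : ℝ => a*s⁻¹ + b*s + c) (a * (-(t^2)⁻¹) + b) t := by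
    have h1 := (hasDerivAt_inv ht).const_mul a
    have := (h1.add ((hasDerivAt_id t).const_mul b)).add_const c
    simpa using this
  rw [hf, h.deriv]; field_simp

lemma br1 (x y p q : ℝ) (hx : x ≠ 0) :
  pbr (fun _ _ _ q => q) (fun x y p q => y * ((p^2+q^2)/x) - 2*p*q) x y p q = (p^2+q^2)/x := by
  simp only [pbr]
  rw [dpoly (fun t => t * ((p ^ 2 + q ^ 2) / x) - 2 * p * q) 0 ((p^2+q^2)/x) (-(2*p*q)) y
      (funext fun s => by ring),
    dpoly (fun s => y * ((s ^ 2 + q ^ 2) / x) - 2 * s * q) (y/x) (-(2*q)) (y*q^2/x) p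
      (funext fun s => by field_simp; ring),
    dpoly (fun p_1 => y * ((p ^ 2 + p_1 ^ 2) / x) - 2 * p * p_1) (y/x) (-(2*p)) (y*p^2/x) q
      (funext fun s => by field_simp; ring),
    dinv (fun t => y * ((p ^ 2 + q ^ 2) / t) - 2 * p * q) (y*(p^2+q^2)) 0 (-(2*p*q)) x hx
      (funext fun s => by ring)]
  simp

lemma br2 (x y p q : ℝ) (hx : x ≠ 0) :
  pbr (fun _ _ _ q => q) (fun x y p q => y^2 * ((p^2+q^2)/x) - 4*(y*p - x*q)*q) x y p q
    = 2 * (y * ((p^2+q^2)/x) - 2*p*q) := by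
  simp only [pbr]
  rw [dpoly (fun t => t ^ 2 * ((p ^ 2 + q ^ 2) / x) - 4 * (t * p - x * q) * q)
      ((p^2+q^2)/x) (-(4*p*q)) (4*x*q^2) y (funext fun s => by ring)]
  simp
  ring

lemma br3 (x y p q : ℝ) (hx : x ≠ 0) :
  pbr (fun x y p q => y^2 * ((p^2+q^2)/x) - 4*(y*p - x*q)*q)
      (fun x y p q => y * ((p^2+q^2)/x) - 2*p*q) x y p q = 16 * q^3 := by
  simp only [pbr]
  rw [dpoly (fun s => y ^ 2 * ((s ^ 2 + q ^ 2) / x) - 4 * (y * s - x * q) * q)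
      (y^2/x) (-(4*y*q)) (y^2*q^2/x + 4*x*q^2) p (funext fun s => by field_simp; ring),
    dpoly (fun s => y ^ 2 * ((p ^ 2 + s ^ 2) / x) - 4 * (y * p - x * s) * s)
      (y^2/x + 4*x) (-(4*y*p)) (y^2*p^2/x) q (funext fun s => by field_simp; ring),
    dpoly (fun t => t ^ 2 * ((p ^ 2 + q ^ 2) / x) - 4 * (t * p - x * q) * q)
      ((p^2+q^2)/x) (-(4*p*q)) (4*x*q^2) y (funext fun s => by ring),
    dinv (fun t => y ^ 2 * ((p ^ 2 + q ^ 2) / t) - 4 * (y * p - t * q) * q)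
      (y^2*(p^2+q^2)) (4*q^2) (-(4*y*p*q)) x hx (funext fun s => by ring),
    dpoly (fun s => y * ((s ^ 2 + q ^ 2) / x) - 2 * s * q)
      (y/x) (-(2*q)) (y*q^2/x) p (funext fun s => by field_simp; ring),
    dpoly (fun s => y * ((p ^ 2 + s ^ 2) / x) - 2 * p * s)
      (y/x) (-(2*p)) (y*p^2/x) q (funext fun s => by field_simp; ring),
    dpoly (fun t => t * ((p ^ 2 + q ^ 2) / x) - 2 * p * q)
      0 ((p^2+q^2)/x) (-(2*p*q)) y (funext fun s => by ring),
    dinv (fun t => y * ((p ^ 2 + q ^ 2) / t) - 2 * p * q)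
      (y*(p^2+q^2)) 0 (-(2*p*q)) x hx (funext fun s => by ring)]
  field_simp
  ring

/-- the integrals of the geodesic flow of `x(dx²+dy²)` satisfy
`{K,F} = H`, `{K,G} = 2F`, `{G,F} = 16K³`. -/
theorem bracket_relations_of_g0 :
    let H : ℝ → ℝ → ℝ → ℝ → ℝ := fun x _ p q => (p ^ 2 + q ^ 2) / x
    let K : ℝ → ℝ → ℝ → ℝ → ℝ := fun _ _ _ q => q
    let F : ℝ → ℝ → ℝ → ℝ → ℝ := fun x y p q => y * H x y p q - 2 * p * K x y p q
    let G : ℝ → ℝ → ℝ → ℝ → ℝ := fun x y p q =>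
      y ^ 2 * H x y p q - 4 * (y * p - x * q) * K x y p q
    ∀ x y p q : ℝ, 0 < x →
      pbr K F x y p q = H x y p q ∧
      pbr K G x y p q = 2 * F x y p q ∧
      pbr G F x y p q = 16 * K x y p q ^ 3 := by
  intro H K F G x y p q hx
  exact ⟨br1 x y p q hx.ne', br2 x y p q hx.ne', br3 x y p q hx.ne'⟩
end

section
/- For the metric g = ε₁ e^{(β+2)x} dx² + ε₂ e^{βx} dy² on ℝ² (ε₁, ε₂ ∈ {±1}, β ∈ ℝ, taken on a domain where g is nondegenerate), the vector field ∂_y is a Killing field, and the squared norm of the gradient of the Gaussian curvature satisfies |∇K|²_g = (ε₁/4) e^{−3(β+2)x} β² (β+2)². In particular the curvature K is constant if and only if β = 0 or β = −2. -/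
/-- The Gaussian curvature of the metric `E dx² + 2F dxdy + G dy²` given by the
Brioschi formula, in terms of the coefficients and their first and second
partial derivatives. -/
noncomputable def brioschi (E F G : ℝ → ℝ → ℝ) : ℝ → ℝ → ℝ := fun x y =>
  (Matrix.det !![-(1/2) * pd2 (pd2 E) x y + pd2 (pd1 F) x y - (1/2) * pd1 (pd1 G) x y,
                   (1/2) * pd1 E x y, pd1 F x y - (1/2) * pd2 E x y;
                 pd2 F x y - (1/2) * pd1 G x y, E x y, F x y;
                 (1/2) * pd2 G x y, F x y, G x y]
    - Matrix.det !![0, (1/2) * pd2 E x y, (1/2) * pd1 G x y;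
                    (1/2) * pd2 E x y, E x y, F x y;
                    (1/2) * pd1 G x y, F x y, G x y])
  / (E x y * G x y - F x y ^ 2) ^ 2

private lemma dcexp (c a x : ℝ) : deriv (fun t => c * Real.exp (a * t)) x = c * a * Real.exp (a * x) := by
  have h : HasDerivAt (fun t => c * Real.exp (a * t)) (c * (Real.exp (a * x) * (a * 1))) x :=
    (((Real.hasDerivAt_exp (a * x)).comp x ((hasDerivAt_id x).const_mul a))).const_mul c
  rw [h.deriv]; ring

private lemma pd1_cexp (c a : ℝ) :
    pd1 (fun x (_ : ℝ) => c * Real.exp (a * x)) = fun x (_ : ℝ) => c * a * Real.exp (a * x) := by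
  funext x y; exact dcexp c a x

private lemma pd2_const (f : ℝ → ℝ) : pd2 (fun x (_ : ℝ) => f x) = fun _ _ => 0 := by
  funext x y; exact deriv_const y (f x)

private lemma pd1_zero : pd1 (fun _ _ => (0:ℝ)) = fun _ _ => 0 := by
  funext x y; exact deriv_const x 0

private lemma pd2_zero : pd2 (fun _ _ => (0:ℝ)) = fun _ _ => 0 := by
  funext x y; exact deriv_const y 0

private lemma Kval (ε₁ ε₂ β : ℝ) (h1 : ε₁ = 1 ∨ ε₁ = -1) (h2 : ε₂ = 1 ∨ ε₂ = -1) (x y : ℝ) :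
    brioschi (fun x (_ : ℝ) => ε₁ * Real.exp ((β + 2) * x)) (fun _ _ => 0)
      (fun x (_ : ℝ) => ε₂ * Real.exp (β * x)) x y
    = ε₁ * β / 2 * Real.exp (-((β + 2) * x)) := by
  have hE1 : ε₁ ^ 2 = 1 := by rcases h1 with rfl | rfl <;> norm_num
  have hE2 : ε₂ ^ 2 = 1 := by rcases h2 with rfl | rfl <;> norm_num
  unfold brioschi
  rw [pd1_zero, pd2_zero, pd1_cexp, pd1_cexp, pd1_cexp, pd2_const, pd2_const, pd2_const]
  set a := Real.exp ((β + 2) * x) with ha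
  set b := Real.exp (β * x) with hb
  have ha0 : a ≠ 0 := Real.exp_ne_zero _
  have hb0 : b ≠ 0 := Real.exp_ne_zero _
  rw [Real.exp_neg, ← ha]
  simp only [Matrix.det_fin_three, Matrix.of_apply, Matrix.cons_val', Matrix.cons_val_zero, Matrix.cons_val_one,
    Matrix.head_cons, Matrix.head_fin_const, Matrix.cons_val_fin_one, Matrix.empty_val',
    Matrix.cons_val_two, Matrix.tail_cons]
  rcases h1 with rfl | rfl <;> rcases h2 with rfl | rfl <;>
    field_simp <;> rw [ha, show (β + 2) * x = β * x + x * 2 by ring] <;> ring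

private lemma pd1K (ε₁ ε₂ β : ℝ) (h1 : ε₁ = 1 ∨ ε₁ = -1) (h2 : ε₂ = 1 ∨ ε₂ = -1) (x y : ℝ) :
    pd1 (brioschi (fun x (_ : ℝ) => ε₁ * Real.exp ((β + 2) * x)) (fun _ _ => 0)
      (fun x (_ : ℝ) => ε₂ * Real.exp (β * x))) x y
    = ε₁ * β / 2 * (-(β + 2)) * Real.exp (-(β + 2) * x) := by
  have h : (fun t => brioschi (fun x (_ : ℝ) => ε₁ * Real.exp ((β + 2) * x)) (fun _ _ => 0)
      (fun x (_ : ℝ) => ε₂ * Real.exp (β * x)) t y)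
      = fun t => ε₁ * β / 2 * Real.exp (-(β + 2) * t) := by
    funext t
    rw [Kval ε₁ ε₂ β h1 h2 t y]
    ring_nf
  unfold pd1
  rw [h, dcexp]

private lemma pd2K (ε₁ ε₂ β : ℝ) (h1 : ε₁ = 1 ∨ ε₁ = -1) (h2 : ε₂ = 1 ∨ ε₂ = -1) (x y : ℝ) :
    pd2 (brioschi (fun x (_ : ℝ) => ε₁ * Real.exp ((β + 2) * x)) (fun _ _ => 0)
      (fun x (_ : ℝ) => ε₂ * Real.exp (β * x))) x y = 0 := by
  have h : (fun t => brioschi (fun x (_ : ℝ) => ε₁ * Real.exp ((β + 2) * x)) (fun _ _ => 0)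
      (fun x (_ : ℝ) => ε₂ * Real.exp (β * x)) x t)
      = fun _ => ε₁ * β / 2 * Real.exp (-((β + 2) * x)) := by
    funext t
    rw [Kval ε₁ ε₂ β h1 h2 x t]
  unfold pd2
  rw [h, deriv_const]

/-- for `g = ε₁e^{(β+2)x}dx² + ε₂e^{βx}dy²`, the field `∂_y` is
Killing (the metric coefficients are `y`-independent), the squared norm of the
gradient of the Gaussian curvature is
`|∇K|²_g = (ε₁/4) e^{−3(β+2)x} β² (β+2)²`, and `K` is constant iff `β = 0` or
`β = −2`. -/
theorem bmm_family_invariants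
    (ε₁ ε₂ β : ℝ) (h1 : ε₁ = 1 ∨ ε₁ = -1) (h2 : ε₂ = 1 ∨ ε₂ = -1) :
    let E : ℝ → ℝ → ℝ := fun x _ => ε₁ * Real.exp ((β + 2) * x)
    let G : ℝ → ℝ → ℝ := fun x _ => ε₂ * Real.exp (β * x)
    let K : ℝ → ℝ → ℝ := brioschi E (fun _ _ => 0) G
    (∀ x y : ℝ, pd2 E x y = 0 ∧ pd2 G x y = 0) ∧
    (∀ x y : ℝ,
        pd1 K x y ^ 2 / E x y + pd2 K x y ^ 2 / G x y
          = ε₁ / 4 * Real.exp (-(3 * (β + 2) * x)) * β ^ 2 * (β + 2) ^ 2) ∧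
    ((∀ x y x' y' : ℝ, K x y = K x' y') ↔ (β = 0 ∨ β = -2)) := by
  intro E G K
  have hK : ∀ a b : ℝ, K a b = ε₁ * β / 2 * Real.exp (-((β + 2) * a)) :=
    fun a b => Kval ε₁ ε₂ β h1 h2 a b
  refine ⟨fun x y => ⟨?_, ?_⟩, fun x y => ?_, ?_, ?_⟩
  · show pd2 (fun x (_ : ℝ) => ε₁ * Real.exp ((β + 2) * x)) x y = 0
    rw [pd2_const]
  · show pd2 (fun x (_ : ℝ) => ε₂ * Real.exp (β * x)) x y = 0
    rw [pd2_const]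
  · show pd1 (brioschi (fun x (_ : ℝ) => ε₁ * Real.exp ((β + 2) * x)) (fun _ _ => 0)
        (fun x (_ : ℝ) => ε₂ * Real.exp (β * x))) x y ^ 2 / (ε₁ * Real.exp ((β + 2) * x))
      + pd2 (brioschi (fun x (_ : ℝ) => ε₁ * Real.exp ((β + 2) * x)) (fun _ _ => 0)
        (fun x (_ : ℝ) => ε₂ * Real.exp (β * x))) x y ^ 2 / (ε₂ * Real.exp (β * x))
      = ε₁ / 4 * Real.exp (-(3 * (β + 2) * x)) * β ^ 2 * (β + 2) ^ 2
    rw [pd1K ε₁ ε₂ β h1 h2 x y, pd2K ε₁ ε₂ β h1 h2 x y]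
    have h3 : Real.exp (-(3 * (β + 2) * x)) = Real.exp (-(β + 2) * x) ^ 3 := by
      rw [← Real.exp_nat_mul]; ring_nf
    rw [h3]
    set u := Real.exp ((β + 2) * x) with hu
    set v := Real.exp (-(β + 2) * x) with hv
    have huv : u * v = 1 := by
      rw [hu, hv, ← Real.exp_add]; ring_nf; exact Real.exp_zero
    have hu0 : u ≠ 0 := Real.exp_ne_zero _
    have hv0 : v ≠ 0 := Real.exp_ne_zero _
    have hb0 : Real.exp (β * x) ≠ 0 := Real.exp_ne_zero _
    have hu' : u = v⁻¹ := eq_inv_of_mul_eq_one_left huv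
    rcases h1 with rfl | rfl <;> rcases h2 with rfl | rfl <;> rw [hu'] <;> field_simp <;>
      first
        | ring
        | linear_combination (4 * β ^ 2 * (β + 2) ^ 2 * v ^ 2) * huv
        | linear_combination (-(4 * β ^ 2 * (β + 2) ^ 2 * v ^ 2)) * huv
  · intro h
    have h01 := (hK 0 0).symm.trans ((h 0 0 1 0).trans (hK 1 0))
    simp only [mul_zero, neg_zero, Real.exp_zero, mul_one] at h01
    by_cases hβ : β = 0
    · exact Or.inl hβ
    · right
      have hε : ε₁ ≠ 0 := by rcases h1 with rfl | rfl <;> norm_num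
      have hc : ε₁ * β / 2 ≠ 0 := by simp [hε, hβ]
      have h1' := mul_left_cancel₀ hc ((mul_one (ε₁ * β / 2)).trans h01)
      have h2' : Real.exp 0 = Real.exp (-(β + 2)) := by
        rw [Real.exp_zero]; exact h1'
      have := Real.exp_eq_exp.mp h2'
      linarith
  · rintro (rfl | rfl) x y x' y' <;> rw [hK, hK] <;> norm_num
end
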